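/- Let U ⊆ ℂ be an open set that is symmetric under complex conjugation, let q : ℂ → ℂ be holomorphic on U, and let t ∈ U be a real number with q'(t) ≠ 0. Define q*(s) = conj(q(conj(s))) for s ∈ U. Then, as s tends to t with s ≠ t, the expression q'(t)/(q(t) − q(s)) − conj(q'(t))/(conj(q(t)) − q*(s)) tends to the limit (−q'(t)·conj(q''(t)) + conj(q'(t))·q''(t)) / (2 |q'(t)|²). -/

import Mathlib

open Complex Filter

private lemma np_aux_tendsto {q : ℂ → ℂ} {t : ℂ} {p : FormalMultilinearSeries ℂ ℂ ℂ}
    (hp : HasFPowerSeriesAt q p t) (ha : deriv q t ≠ 0) :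
    Tendsto (fun s : ℂ => deriv q t / (q t - q s) + (s - t)⁻¹)
      (nhdsWithin t {t}ᶜ) (nhds (p.coeff 2 / deriv q t)) := by
  set G1 : ℂ → ℂ := dslope q t with hG1def
  set G2 : ℂ → ℂ := dslope G1 t with hG2def
  have hp1 : HasFPowerSeriesAt G1 p.fslope t := hp.has_fpower_series_dslope_fslope
  have hp2 : HasFPowerSeriesAt G2 p.fslope.fslope t := hp1.has_fpower_series_dslope_fslope
  have hG1t : G1 t = deriv q t := dslope_same q t
  have hG2t : G2 t = p.coeff 2 := by
    rw [hG2def, dslope_same, hp1.deriv]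
    exact FormalMultilinearSeries.coeff_fslope
  have hc1 : ContinuousAt G1 t := hp1.continuousAt
  have hc2 : ContinuousAt G2 t := hp2.continuousAt
  have hne : ∀ᶠ s in nhds t, G1 s ≠ 0 := hc1.eventually_ne (hG1t ▸ ha)
  have hmain : Tendsto (fun s : ℂ => G2 s / G1 s) (nhdsWithin t {t}ᶜ)
      (nhds (p.coeff 2 / deriv q t)) := by
    have := (hc2.tendsto.div hc1.tendsto (hG1t ▸ ha))
    rw [hG2t, hG1t] at this
    exact this.mono_left nhdsWithin_le_nhds
  refine hmain.congr' ?_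
  filter_upwards [eventually_nhdsWithin_of_eventually_nhds hne,
    self_mem_nhdsWithin] with s hs hst
  have hst' : s ≠ t := hst
  have e1 : q s - q t = (s - t) * G1 s := by
    have := sub_smul_dslope q t s; rw [smul_eq_mul] at this; rw [hG1def]; exact this.symm
  have e2 : G1 s - G1 t = (s - t) * G2 s := by
    have := sub_smul_dslope G1 t s; rw [smul_eq_mul] at this; rw [hG2def]; exact this.symm
  have hsub : s - t ≠ 0 := sub_ne_zero.mpr hst'
  have e3 : q t - q s = -((s - t) * G1 s) := by linear_combination -e1
  have e4 : deriv q t = G1 s - (s - t) * G2 s := by rw [← hG1t]; linear_combination -e2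
  rw [eq_comm, e3, e4]
  field_simp
  ring

private lemma np_conj_tendsto {t : ℂ} (htr : (starRingEnd ℂ) t = t) :
    Tendsto (fun s : ℂ => (starRingEnd ℂ) s) (nhdsWithin t {t}ᶜ) (nhdsWithin t {t}ᶜ) := by
  rw [tendsto_nhdsWithin_iff]
  constructor
  · have := (Complex.continuous_conj.tendsto t).mono_left (nhdsWithin_le_nhds (s := {t}ᶜ))
    rwa [htr] at this
  · filter_upwards [self_mem_nhdsWithin] with s hs
    simp only [Set.mem_compl_iff, Set.mem_singleton_iff] at hs ⊢
    intro h
    apply hs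
    have := congrArg (starRingEnd ℂ) h
    rwa [Complex.conj_conj, htr] at this

theorem np_kernel_removable_singularity (U : Set ℂ) (hU : IsOpen U)
    (hUsymm : ∀ z ∈ U, (starRingEnd ℂ) z ∈ U)
    (q : ℂ → ℂ) (hq : DifferentiableOn ℂ q U)
    (t : ℝ) (ht : (t : ℂ) ∈ U) (hq' : deriv q t ≠ 0) :
    Tendsto
      (fun s : ℂ =>
        deriv q t / (q t - q s)
          - (starRingEnd ℂ) (deriv q t)
              / ((starRingEnd ℂ) (q t) - (starRingEnd ℂ) (q ((starRingEnd ℂ) s))))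
      (nhdsWithin (t : ℂ) {(t : ℂ)}ᶜ)
      (nhds ((-(deriv q t) * (starRingEnd ℂ) (deriv (deriv q) t)
          + (starRingEnd ℂ) (deriv q t) * deriv (deriv q) t)
        / (2 * (‖deriv q t‖ : ℂ) ^ 2))) := by
  have hA : AnalyticAt ℂ q (t : ℂ) := hq.analyticAt (hU.mem_nhds ht)
  obtain ⟨p, hp⟩ := hA
  set a : ℂ := deriv q t with ha
  set c : ℂ := p.coeff 2 with hc
  have htr : (starRingEnd ℂ) (t : ℂ) = t := Complex.conj_ofReal t
  -- second derivative = 2 * c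
  have hdd : deriv (deriv q) (t : ℂ) = 2 * c := by
    obtain ⟨r, hr⟩ := hp
    have h2 := hr.factorial_smul (1 : ℂ) 2
    have e1 : deriv (deriv q) (t : ℂ) = iteratedDeriv 2 q (t : ℂ) := by
      simp [iteratedDeriv_succ, iteratedDeriv_zero]
    rw [e1, iteratedDeriv_eq_iteratedFDeriv, ← h2]
    have : p 2 (fun _ => (1 : ℂ)) = p.coeff 2 := rfl
    rw [this]
    simp [Nat.factorial, nsmul_eq_mul]
    exact hc.symm
  -- the main limit for h
  have hmain : Tendsto (fun s : ℂ => a / (q t - q s) + (s - (t : ℂ))⁻¹)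
      (nhdsWithin (t : ℂ) {(t : ℂ)}ᶜ) (nhds (c / a)) := np_aux_tendsto hp hq'
  -- conjugated limit
  have hconj : Tendsto (fun s : ℂ =>
      (starRingEnd ℂ) (a / (q t - q ((starRingEnd ℂ) s)) + ((starRingEnd ℂ) s - (t : ℂ))⁻¹))
      (nhdsWithin (t : ℂ) {(t : ℂ)}ᶜ) (nhds ((starRingEnd ℂ) (c / a))) := by
    exact (Complex.continuous_conj.tendsto _).comp (hmain.comp (np_conj_tendsto htr))
  have hdiff := hmain.sub hconj
  have key : (fun s : ℂ =>
        deriv q t / (q t - q s)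
          - (starRingEnd ℂ) (deriv q t)
              / ((starRingEnd ℂ) (q t) - (starRingEnd ℂ) (q ((starRingEnd ℂ) s)))) =
      (fun s : ℂ => (a / (q t - q s) + (s - (t : ℂ))⁻¹)
        - (starRingEnd ℂ) (a / (q t - q ((starRingEnd ℂ) s)) + ((starRingEnd ℂ) s - (t : ℂ))⁻¹)) := by
    funext s
    rw [map_add, map_div₀, map_inv₀, map_sub, map_sub, htr, Complex.conj_conj, ← ha]
    ring
  rw [key]
  convert hdiff using 2
  -- identify the limit value
  rw [hdd, map_div₀]
  have hca : (starRingEnd ℂ) a ≠ 0 := by simpa using hq'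
  have habs : (‖a‖ : ℂ) ^ 2 = a * (starRingEnd ℂ) a := by
    rw [Complex.mul_conj, ← Complex.sq_norm]
    push_cast
    ring
  rw [ha] at habs ⊢
  rw [habs]
  field_simp
  rw [map_mul, map_ofNat, ← ha, div_eq_iff (mul_ne_zero hq' hca)]
  field_simp
  ring
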